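/- Let P(x) = x^3 - b x^2 + c x + d with b > 2, d > 0, P(-1) > 0 and P(1) > 0. Then every root of P has modulus greater than 1 (all roots lie outside the closed unit disk). -/

import Mathlib

set_option maxHeartbeats 1000000


theorem stmt_16 (b c d : ℝ) (hb : 2 < b) (hd : 0 < d)
    (hm1 : 0 < (-1 : ℝ) ^ 3 - b * (-1) ^ 2 + c * (-1) + d)
    (h1 : 0 < (1 : ℝ) ^ 3 - b * 1 ^ 2 + c * 1 + d) :
    ∀ z : ℂ, z ^ 3 - (b : ℂ) * z ^ 2 + (c : ℂ) * z + (d : ℂ) = 0 →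
      1 < ‖z‖ := by
  have hm1' : 0 < -1 - b - c + d := by nlinarith [hm1]
  have h1' : 0 < 1 - b + c + d := by nlinarith [h1]
  set M : ℝ := 1 + |c| + d with hM
  have hc1 : c ≤ |c| := le_abs_self c
  have hc2 : -|c| ≤ c := neg_abs_le c
  have hM1 : 1 ≤ M := by have := abs_nonneg c; simp [hM]; linarith
  have hfM : (-M)^3 - b*(-M)^2 + c*(-M) + d < 0 := by nlinarith [sq_nonneg M, abs_nonneg c]
  obtain ⟨r, hrmem, hr0⟩ : ∃ r ∈ Set.Icc (-M) (-1 : ℝ), r^3 - b*r^2 + c*r + d = 0 := by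
    have hcont : ContinuousOn (fun x : ℝ => x^3 - b*x^2 + c*x + d) (Set.Icc (-M) (-1)) := by
      apply Continuous.continuousOn; continuity
    have h := intermediate_value_Icc (by linarith : (-M : ℝ) ≤ -1) hcont
    have hmem : (0:ℝ) ∈ Set.Icc ((-M)^3 - b*(-M)^2 + c*(-M) + d)
        ((-1:ℝ)^3 - b*(-1)^2 + c*(-1) + d) := ⟨hfM.le, hm1.le⟩
    obtain ⟨r, hr, hr0⟩ := h hmem
    exact ⟨r, hr, hr0⟩
  have hr1 : r < -1 := by
    rcases lt_or_eq_of_le hrmem.2 with h | h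
    · exact h
    · exfalso; rw [h] at hr0; nlinarith
  set p : ℝ := r - b with hp
  set q : ℝ := r^2 - b*r + c with hq
  have hdq : d = -r * q := by rw [hq]; linear_combination hr0
  have hfact1 : (1 - r) * (1 + p + q) = 1 - b + c + d := by
    rw [hp, hq]; linear_combination -hr0
  have hfact2 : (-1 - r) * (1 - p + q) = -1 - b - c + d := by
    rw [hp, hq]; linear_combination -hr0
  have h1r : (0:ℝ) < 1 - r := by linarith
  have hm1r : (0:ℝ) < -1 - r := by linarith
  have hq1 : 0 < 1 + p + q := by nlinarith [hfact1, h1', h1r]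
  have hqm1 : 0 < 1 - p + q := by nlinarith [hfact2, hm1', hm1r]
  have hq2 : 2 < q := by rw [hp] at hq1; linarith
  intro z hz
  have e1 : (b : ℂ) = (r : ℂ) - (p : ℂ) := by rw [hp]; push_cast; ring
  have e2 : (c : ℂ) = (q : ℂ) - (r:ℂ)*(p:ℂ) := by rw [hq, hp]; push_cast; ring
  have e3 : (d : ℂ) = -(r:ℂ) * (q:ℂ) := by rw [hdq]; push_cast; ring
  have key : ((z : ℂ) - r) * (z^2 + p*z + q) = 0 := by
    have hid : z^3 - (b:ℂ)*z^2 + (c:ℂ)*z + (d:ℂ) = (z - r)*(z^2 + p*z + q) := by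
      rw [e1, e2, e3]; ring
    rw [← hid]; exact hz
  rcases mul_eq_zero.mp key with h | h
  · rw [sub_eq_zero] at h
    rw [h, Complex.norm_real, Real.norm_eq_abs, abs_of_neg (by linarith : r < 0)]
    linarith
  · have hconj : (starRingEnd ℂ) z ^ 2 + (p:ℂ) * (starRingEnd ℂ) z + (q:ℂ) = 0 := by
      have := congrArg (starRingEnd ℂ) h
      simpa [map_add, map_mul, map_pow, Complex.conj_ofReal] using this
    rcases eq_or_ne z ((starRingEnd ℂ) z) with hzz | hzz
    · -- z is real
      have hzre : z = (z.re : ℂ) := (Complex.conj_eq_iff_re.mp hzz.symm).symm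
      set x : ℝ := z.re with hx
      have hxq : x^2 + p*x + q = 0 := by
        have h' := h
        rw [hzre] at h'
        exact_mod_cast h'
      rw [hzre, Complex.norm_real, Real.norm_eq_abs]
      by_contra hle
      push_neg at hle
      have hx1 : x ≤ 1 := (abs_le.mp hle).2
      have hx2 : -1 ≤ x := (abs_le.mp hle).1
      have hpos : 0 < x^2 + p*x + q := by
        rcases lt_trichotomy x 0 with hxs | hxs | hxs
        · have e : x^2 + p*x + q = (1+x)*(q+x) + (-x)*(1-p+q) := by ring
          rw [e]
          have t1 : 0 ≤ (1+x)*(q+x) :=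
            mul_nonneg (by linarith) (by linarith)
          have t2 : 0 < (-x)*(1-p+q) := mul_pos (by linarith) hqm1
          linarith
        · rw [hxs]; norm_num; linarith
        · have e : x^2 + p*x + q = (1-x)*(q-x) + x*(1+p+q) := by ring
          rw [e]
          have t1 : 0 ≤ (1-x)*(q-x) :=
            mul_nonneg (by linarith) (by linarith)
          have t2 : 0 < x*(1+p+q) := mul_pos hxs hq1
          linarith
      linarith [hpos, hxq]
    · -- z is not real; conjugate pair
      have hsplit : (z - (starRingEnd ℂ) z) * (z + (starRingEnd ℂ) z + (p:ℂ)) = 0 := by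
        linear_combination h - hconj
      rcases mul_eq_zero.mp hsplit with h' | h'
      · exact absurd (sub_eq_zero.mp h') hzz
      · have hsum : z + (starRingEnd ℂ) z = -(p:ℂ) := by linear_combination h'
        have hmul : z * (starRingEnd ℂ) z = (q:ℂ) := by
          linear_combination z * hsum - h
        have hnsq : (Complex.normSq z : ℂ) = (q:ℂ) := by rw [← Complex.mul_conj]; exact hmul
        have hnsq' : Complex.normSq z = q := by exact_mod_cast hnsq
        have habs : ‖z‖^2 = q := by rw [Complex.sq_norm]; exact hnsq'
        nlinarith [norm_nonneg z, habs, hq2]
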